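/- Let M be a cuspidal g-module. The tensor product g_R' ⊗ M, equipped with the g-action X·(y ⊗ v) = [X,y] ⊗ v + y ⊗ (X·v) (X ∈ g, y ∈ g_R', v ∈ M) and the Z-action t^n·(L_s ⊗ v) = L_{n+s} ⊗ v (n ∈ R, s ∉ R, v ∈ M), is a Zg-module. -/

import Mathlib

open scoped BigOperators

noncomputable section

/-- The index `2i-1` (1-based), i.e. `2i` (0-based). -/
def p1 {d z : ℕ} (h : 2*z ≤ d) (i : Fin z) : Fin d := ⟨2*(i:ℕ), by have := i.2; omega⟩

/-- The index `2i` (1-based), i.e. `2i+1` (0-based). -/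
def p2 {d z : ℕ} (h : 2*z ≤ d) (i : Fin z) : Fin d := ⟨2*(i:ℕ)+1, by have := i.2; omega⟩

/-- `σ(m,n) = ∏_i q_i^{n_{2i} m_{2i-1}}`. -/
def qsigma {d z : ℕ} (h : 2*z ≤ d) (q : Fin z → ℂ) (m n : Fin d → ℤ) : ℂ :=
  ∏ i : Fin z, q i ^ (n (p2 h i) * m (p1 h i))

/-- The subgroup `R = ⊕ (ℤ k_i e_{2i-1} ⊕ ℤ k_i e_{2i}) ⊕ ⊕_{l > 2z} ℤ e_l` of `ℤ^d`. -/
def Rgrp {d z : ℕ} (h : 2*z ≤ d) (k : Fin z → ℕ) : AddSubgroup (Fin d → ℤ) where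
  carrier := {m | ∀ i : Fin z, ((k i : ℤ) ∣ m (p1 h i)) ∧ ((k i : ℤ) ∣ m (p2 h i))}
  zero_mem' := fun i => ⟨dvd_zero _, dvd_zero _⟩
  add_mem' := fun ha hb i => ⟨dvd_add (ha i).1 (hb i).1, dvd_add (ha i).2 (hb i).2⟩
  neg_mem' := fun ha i => ⟨dvd_neg.mpr (ha i).1, dvd_neg.mpr (ha i).2⟩

/-- Membership in the set `Γ₀` of distinguished coset representatives for `ℤ^d/R`. -/
def inGamma0 {d z : ℕ} (h : 2*z ≤ d) (k : Fin z → ℕ) (n : Fin d → ℤ) : Prop :=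
  (∀ i : Fin z, 0 ≤ n (p1 h i) ∧ n (p1 h i) < k i ∧ 0 ≤ n (p2 h i) ∧ n (p2 h i) < k i) ∧
  ∀ l : Fin d, 2*z ≤ (l:ℕ) → n l = 0

/-- The representative in `Γ₀` of the coset `n + R`. -/
def repZ {d z : ℕ} (h : 2*z ≤ d) (k : Fin z → ℕ) (n : Fin d → ℤ) : Fin d → ℤ :=
  fun l => if hl : (l:ℕ) < 2*z then n l % (k ⟨(l:ℕ)/2, by omega⟩ : ℤ) else 0

/-- `(γ|m) = ∑ γ_i m_i`. -/
def ginner {d : ℕ} (γ : Fin d → ℂ) (m : Fin d → ℤ) : ℂ := ∑ i, γ i * (m i : ℂ)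

/-- The matrix `X^n = ⊗_i X_{2i-1}^{n_{2i-1}} X_{2i}^{n_{2i}} ∈ gl_N`, realized on the
index set `∏_i Fin (k_i)` (of cardinality `N = k_1 ⋯ k_z`). -/
def Xmat {d z : ℕ} (h : 2*z ≤ d) (k : Fin z → ℕ) (q : Fin z → ℂ) (n : Fin d → ℤ) :
    Matrix ((i : Fin z) → Fin (k i)) ((i : Fin z) → Fin (k i)) ℂ :=
  Matrix.of fun j l => ∏ i : Fin z,
    (q i ^ (n (p1 h i) * (j i : ℤ)) *
      (if (l i : ℤ) = ((j i : ℤ) + n (p2 h i)) % (k i) then 1 else 0))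

lemma repZ_mem {d z : ℕ} (h : 2*z ≤ d) (k : Fin z → ℕ) (hk : ∀ i, 0 < k i)
    (n : Fin d → ℤ) : inGamma0 h k (repZ h k n) := by
  constructor
  · intro i
    have h1 : ((p1 h i : ℕ)) < 2*z := by simp only [p1]; have := i.2; omega
    have h2 : ((p2 h i : ℕ)) < 2*z := by simp only [p2]; have := i.2; omega
    have e1 : (⟨((p1 h i : ℕ))/2, by omega⟩ : Fin z) = i := by
      apply Fin.ext; simp only [p1]; omega
    have e2 : (⟨((p2 h i : ℕ))/2, by omega⟩ : Fin z) = i := by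
      apply Fin.ext; simp only [p2]; omega
    have hk' : (0:ℤ) < (k i : ℤ) := by exact_mod_cast hk i
    refine ⟨?_, ?_, ?_, ?_⟩ <;> simp only [repZ, dif_pos h1, dif_pos h2, e1, e2]
    · exact Int.emod_nonneg _ (by exact_mod_cast (hk i).ne')
    · exact Int.emod_lt_of_pos _ hk'
    · exact Int.emod_nonneg _ (by exact_mod_cast (hk i).ne')
    · exact Int.emod_lt_of_pos _ hk'
  · intro l hl
    simp only [repZ, dif_neg (by omega : ¬ (l:ℕ) < 2*z)]

/-- A family of operators is a weight module with uniformly bounded finite-dimensional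
weight spaces (cuspidality), with respect to the Cartan operator `L0`. -/
def IsCuspidalFor {M : Type*} [AddCommGroup M] [Module ℂ M] (L0 : Module.End ℂ M) : Prop :=
  ((⨆ c : ℂ, Module.End.eigenspace L0 c) = ⊤) ∧
  (∀ c : ℂ, FiniteDimensional ℂ (Module.End.eigenspace L0 c)) ∧
  ∃ B : ℕ, ∀ c : ℂ, Module.finrank ℂ (Module.End.eigenspace L0 c) ≤ B

/-- The defining bracket relations of the solenoidal Lie algebra `g` over the rational
quantum torus, for a family of operators `L` (i.e. `M` is a `g`-module). -/
def GRel {d z : ℕ} (h : 2*z ≤ d) (k : Fin z → ℕ) (q : Fin z → ℂ) (γ : Fin d → ℂ)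
    {M : Type*} [AddCommGroup M] [Module ℂ M] (L : (Fin d → ℤ) → Module.End ℂ M) : Prop :=
  (∀ m n, m ∈ Rgrp h k → n ∈ Rgrp h k → ⁅L m, L n⁆ = (ginner γ (n - m)) • L (m + n)) ∧
  (∀ m s, m ∈ Rgrp h k → s ∉ Rgrp h k → ⁅L m, L s⁆ = (ginner γ s) • L (m + s)) ∧
  (∀ r s, r ∉ Rgrp h k → s ∉ Rgrp h k →
    ⁅L r, L s⁆ = (qsigma h q r s - qsigma h q s r) • L (r + s))

/-- The relations making `(L, T)` a `Zg`-module structure: `Z` acts associatively and the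
semidirect-product brackets `[L_m, t^n] = (γ|n) t^{m+n}`, `[L_r, t^n] = 0` hold. -/
def ZRel {d z : ℕ} (h : 2*z ≤ d) (k : Fin z → ℕ) (γ : Fin d → ℂ)
    {M : Type*} [AddCommGroup M] [Module ℂ M] (L T : (Fin d → ℤ) → Module.End ℂ M) : Prop :=
  (∀ m n, m ∈ Rgrp h k → n ∈ Rgrp h k → T m * T n = T (m + n)) ∧
  (T 0 = 1) ∧
  (∀ m n, m ∈ Rgrp h k → n ∈ Rgrp h k → ⁅L m, T n⁆ = (ginner γ n) • T (m + n)) ∧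
  (∀ r n, r ∉ Rgrp h k → n ∈ Rgrp h k → ⁅L r, T n⁆ = 0)

open scoped TensorProduct

lemma add_not_mem_R {d z : ℕ} (h : 2*z ≤ d) (k : Fin z → ℕ) {m s : Fin d → ℤ}
    (hm : m ∈ Rgrp h k) (hs : s ∉ Rgrp h k) : m + s ∉ Rgrp h k :=
  fun hc => hs (by simpa using add_mem (neg_mem hm) hc)

/-- The action of `g ⋉ Z` on `g_R' ⊗ M` from Lemma 6.2: `g` acts by
`X·(y ⊗ v) = [X,y] ⊗ v + y ⊗ (X·v)` and `Z` acts by `t^n·(L_s ⊗ v) = L_{n+s} ⊗ v`.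
Here `G'` is the ideal `g_R' = span{L_s : s ∉ R}` with basis `c`, `M` a `g`-module with
action operators `LM`, and the brackets `[L_x, L_s]` have been expanded using the
structure constants of `g`. -/
def TPAction {d z : ℕ} (h : 2*z ≤ d) (k : Fin z → ℕ) (q : Fin z → ℂ) (γ : Fin d → ℂ)
    {G' M : Type*} [AddCommGroup G'] [Module ℂ G'] [AddCommGroup M] [Module ℂ M]
    (c : Module.Basis {s : Fin d → ℤ // s ∉ Rgrp h k} ℂ G')
    (LM : (Fin d → ℤ) → Module.End ℂ M)
    (Lt Tt : (Fin d → ℤ) → Module.End ℂ (G' ⊗[ℂ] M)) : Prop :=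
  (∀ m (hm : m ∈ Rgrp h k), ∀ s (hs : s ∉ Rgrp h k), ∀ v : M,
    Lt m (c ⟨s, hs⟩ ⊗ₜ[ℂ] v)
      = (ginner γ s) • (c ⟨m + s, add_not_mem_R h k hm hs⟩ ⊗ₜ[ℂ] v)
        + c ⟨s, hs⟩ ⊗ₜ[ℂ] (LM m v)) ∧
  (∀ r (_ : r ∉ Rgrp h k), ∀ s (hs : s ∉ Rgrp h k), ∀ (hrs : r + s ∉ Rgrp h k), ∀ v : M,
    Lt r (c ⟨s, hs⟩ ⊗ₜ[ℂ] v)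
      = (qsigma h q r s - qsigma h q s r) • (c ⟨r + s, hrs⟩ ⊗ₜ[ℂ] v)
        + c ⟨s, hs⟩ ⊗ₜ[ℂ] (LM r v)) ∧
  (∀ r (_ : r ∉ Rgrp h k), ∀ s (hs : s ∉ Rgrp h k), r + s ∈ Rgrp h k → ∀ v : M,
    Lt r (c ⟨s, hs⟩ ⊗ₜ[ℂ] v) = c ⟨s, hs⟩ ⊗ₜ[ℂ] (LM r v)) ∧
  (∀ n (hn : n ∈ Rgrp h k), ∀ s (hs : s ∉ Rgrp h k), ∀ v : M,
    Tt n (c ⟨s, hs⟩ ⊗ₜ[ℂ] v) = c ⟨n + s, add_not_mem_R h k hn hs⟩ ⊗ₜ[ℂ] v)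

/-- The subspace `J ⊆ g_R' ⊗ M` spanned by the finite sums `∑_s L_s ⊗ v_s` (over
`s ∉ R`) such that `∑_s L_{n+s} v_s = 0` for every `n ∈ R`. -/
def Jsub {d z : ℕ} (h : 2*z ≤ d) (k : Fin z → ℕ)
    {G' M : Type*} [AddCommGroup G'] [Module ℂ G'] [AddCommGroup M] [Module ℂ M]
    (c : Module.Basis {s : Fin d → ℤ // s ∉ Rgrp h k} ℂ G')
    (LM : (Fin d → ℤ) → Module.End ℂ M) : Submodule ℂ (G' ⊗[ℂ] M) :=
  Submodule.span ℂ {w : G' ⊗[ℂ] M | ∃ f : {s : Fin d → ℤ // s ∉ Rgrp h k} →₀ M,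
    (∀ n ∈ Rgrp h k, (f.sum fun s v => LM (n + s.1) v) = 0) ∧
    w = f.sum fun s v => c s ⊗ₜ[ℂ] v}


section Aux

lemma mem_Rgrp_iff {d z : ℕ} (h : 2*z ≤ d) (k : Fin z → ℕ) (m : Fin d → ℤ) :
    m ∈ Rgrp h k ↔ ∀ i : Fin z, ((k i : ℤ) ∣ m (p1 h i)) ∧ ((k i : ℤ) ∣ m (p2 h i)) :=
  Iff.rfl

lemma ginner_add' {d : ℕ} (γ : Fin d → ℂ) (a b : Fin d → ℤ) :
    ginner γ (a + b) = ginner γ a + ginner γ b := by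
  simp only [ginner, Pi.add_apply, Int.cast_add, mul_add, Finset.sum_add_distrib]

lemma ginner_sub' {d : ℕ} (γ : Fin d → ℂ) (a b : Fin d → ℤ) :
    ginner γ (a - b) = ginner γ a - ginner γ b := by
  simp only [ginner, Pi.sub_apply, Int.cast_sub, mul_sub, Finset.sum_sub_distrib]

lemma zpow_one_of_dvd {q : ℂ} {k : ℕ} (hq1 : q ^ (k : ℤ) = 1) {a : ℤ}
    (ha : (k : ℤ) ∣ a) : q ^ a = 1 := by
  obtain ⟨t, rfl⟩ := ha
  rw [zpow_mul, hq1, one_zpow]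

lemma qsigma_one_fst {d z : ℕ} (h : 2*z ≤ d) {k : Fin z → ℕ} {q : Fin z → ℂ}
    (hq1 : ∀ i, q i ^ ((k i : ℕ) : ℤ) = 1) {m : Fin d → ℤ} (n : Fin d → ℤ)
    (hm : m ∈ Rgrp h k) : qsigma h q m n = 1 := by
  apply Finset.prod_eq_one
  intro i _
  exact zpow_one_of_dvd (hq1 i) (Dvd.dvd.mul_left ((mem_Rgrp_iff h k m).mp hm i).1 _)

lemma qsigma_one_snd {d z : ℕ} (h : 2*z ≤ d) {k : Fin z → ℕ} {q : Fin z → ℂ}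
    (hq1 : ∀ i, q i ^ ((k i : ℕ) : ℤ) = 1) (m : Fin d → ℤ) {n : Fin d → ℤ}
    (hn : n ∈ Rgrp h k) : qsigma h q m n = 1 := by
  apply Finset.prod_eq_one
  intro i _
  exact zpow_one_of_dvd (hq1 i) (Dvd.dvd.mul_right ((mem_Rgrp_iff h k n).mp hn i).2 _)

lemma qsigma_add_fst {d z : ℕ} (h : 2*z ≤ d) {q : Fin z → ℂ}
    (hq0 : ∀ i, q i ≠ 0) (m m' n : Fin d → ℤ) :
    qsigma h q (m + m') n = qsigma h q m n * qsigma h q m' n := by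
  rw [qsigma, qsigma, qsigma, ← Finset.prod_mul_distrib]
  apply Finset.prod_congr rfl
  intro i _
  rw [Pi.add_apply, mul_add, zpow_add₀ (hq0 i)]

lemma qsigma_add_snd {d z : ℕ} (h : 2*z ≤ d) {q : Fin z → ℂ}
    (hq0 : ∀ i, q i ≠ 0) (m n n' : Fin d → ℤ) :
    qsigma h q m (n + n') = qsigma h q m n * qsigma h q m n' := by
  rw [qsigma, qsigma, qsigma, ← Finset.prod_mul_distrib]
  apply Finset.prod_congr rfl
  intro i _
  rw [Pi.add_apply, add_mul, zpow_add₀ (hq0 i)]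

lemma qsigma_symm' {d z : ℕ} (h : 2*z ≤ d) {k : Fin z → ℕ} {q : Fin z → ℂ}
    (hq0 : ∀ i, q i ≠ 0) (hq1 : ∀ i, q i ^ ((k i : ℕ) : ℤ) = 1) {r s : Fin d → ℤ}
    (hrs : r + s ∈ Rgrp h k) : qsigma h q r s = qsigma h q s r := by
  apply Finset.prod_congr rfl
  intro i _
  have h1 : (k i : ℤ) ∣ r (p1 h i) + s (p1 h i) := ((mem_Rgrp_iff h k _).mp hrs i).1
  have h2 : (k i : ℤ) ∣ r (p2 h i) + s (p2 h i) := ((mem_Rgrp_iff h k _).mp hrs i).2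
  have hdvd : (k i : ℤ) ∣ (s (p2 h i) * r (p1 h i) - r (p2 h i) * s (p1 h i)) := by
    have e : s (p2 h i) * r (p1 h i) - r (p2 h i) * s (p1 h i)
        = (r (p2 h i) + s (p2 h i)) * r (p1 h i) - r (p2 h i) * (r (p1 h i) + s (p1 h i)) := by
      ring
    rw [e]
    exact dvd_sub (Dvd.dvd.mul_right h2 _) (Dvd.dvd.mul_left h1 _)
  have e2 : s (p2 h i) * r (p1 h i)
      = r (p2 h i) * s (p1 h i) + (s (p2 h i) * r (p1 h i) - r (p2 h i) * s (p1 h i)) := by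
    ring
  rw [e2, zpow_add₀ (hq0 i), zpow_one_of_dvd (hq1 i) hdvd, mul_one]

open scoped TensorProduct in
lemma endTensorExt {G' M : Type*} [AddCommGroup G'] [Module ℂ G'] [AddCommGroup M] [Module ℂ M]
    {ι : Type*} (c : Module.Basis ι ℂ G') (F G : Module.End ℂ (G' ⊗[ℂ] M))
    (hFG : ∀ s v, F (c s ⊗ₜ v) = G (c s ⊗ₜ v)) : F = G := by
  apply TensorProduct.ext
  apply c.ext; intro s; apply LinearMap.ext; intro v
  simpa using hFG s v

open Classical in
/-- Extension of the basis `c` of `g_R'` to a total function on `ℤ^d`, zero on `R`. -/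
def eeB {d z : ℕ} (h : 2*z ≤ d) (k : Fin z → ℕ) {G' : Type*} [AddCommGroup G'] [Module ℂ G']
    (c : Module.Basis {s : Fin d → ℤ // s ∉ Rgrp h k} ℂ G') (s : Fin d → ℤ) : G' :=
  if hs : s ∈ Rgrp h k then 0 else c ⟨s, hs⟩

lemma eeB_of_not_mem {d z : ℕ} (h : 2*z ≤ d) (k : Fin z → ℕ) {G' : Type*} [AddCommGroup G']
    [Module ℂ G'] (c : Module.Basis {s : Fin d → ℤ // s ∉ Rgrp h k} ℂ G') {s : Fin d → ℤ}
    (hs : s ∉ Rgrp h k) : eeB h k c s = c ⟨s, hs⟩ := dif_neg hs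

lemma eeB_of_mem {d z : ℕ} (h : 2*z ≤ d) (k : Fin z → ℕ) {G' : Type*} [AddCommGroup G']
    [Module ℂ G'] (c : Module.Basis {s : Fin d → ℤ // s ∉ Rgrp h k} ℂ G') {s : Fin d → ℤ}
    (hs : s ∈ Rgrp h k) : eeB h k c s = 0 := dif_pos hs

open Classical in
/-- The structure coefficient of the action of `L_x` moving `L_s ⊗ v` to `L_{x+s} ⊗ v`. -/
def cfK {d z : ℕ} (h : 2*z ≤ d) (k : Fin z → ℕ) (q : Fin z → ℂ) (γ : Fin d → ℂ)
    (x s : Fin d → ℤ) : ℂ :=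
  if x ∈ Rgrp h k then ginner γ s else qsigma h q x s - qsigma h q s x

lemma cfK_of_mem {d z : ℕ} (h : 2*z ≤ d) (k : Fin z → ℕ) (q : Fin z → ℂ) (γ : Fin d → ℂ)
    {x : Fin d → ℤ} (hx : x ∈ Rgrp h k) (s : Fin d → ℤ) :
    cfK h k q γ x s = ginner γ s := if_pos hx

lemma cfK_of_not_mem {d z : ℕ} (h : 2*z ≤ d) (k : Fin z → ℕ) (q : Fin z → ℂ) (γ : Fin d → ℂ)
    {x : Fin d → ℤ} (hx : x ∉ Rgrp h k) (s : Fin d → ℤ) :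
    cfK h k q γ x s = qsigma h q x s - qsigma h q s x := if_neg hx

end Aux

/-- Lemma 6.2(1).  Let `M` be a cuspidal `g`-module.  The tensor
product `g_R' ⊗ M` (here `G' ⊗ M`, where `G'` is the ideal `g_R'` with basis
`{L_s : s ∉ R}`), equipped with the `g`-action `X·(y ⊗ v) = [X,y] ⊗ v + y ⊗ (X·v)` and
the `Z`-action `t^n·(L_s ⊗ v) = L_{n+s} ⊗ v`, is a `Zg`-module: the operators `Lt`
satisfy the defining relations of `g` and the operators `(Lt, Tt)` satisfy the
relations of a `Zg`-module. -/
theorem stmt14 (d z : ℕ) (hd : 0 < d) (hz : 0 < z) (h2z : 2*z ≤ d)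
    (k : Fin z → ℕ) (hk : ∀ i, 0 < k i)
    (q : Fin z → ℂ) (hq : ∀ i, IsPrimitiveRoot (q i) (k i))
    (hkdvd : ∀ (i : ℕ) (hi : i + 1 < z), k ⟨i+1, hi⟩ ∣ k ⟨i, by omega⟩)
    (γ : Fin d → ℂ) (hγ : LinearIndependent ℚ γ)
    (M : Type*) [AddCommGroup M] [Module ℂ M]
    (LM : (Fin d → ℤ) → Module.End ℂ M)
    (hg : GRel h2z k q γ LM) (hcusp : IsCuspidalFor (LM 0))
    (G' : Type*) [AddCommGroup G'] [Module ℂ G']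
    (c : Module.Basis {s : Fin d → ℤ // s ∉ Rgrp h2z k} ℂ G')
    (Lt Tt : (Fin d → ℤ) → Module.End ℂ (G' ⊗[ℂ] M))
    (hact : TPAction h2z k q γ c LM Lt Tt) :
    GRel h2z k q γ Lt ∧ ZRel h2z k γ Lt Tt := by
  classical
  obtain ⟨hgRR, hgRS, hgSS⟩ := hg
  obtain ⟨hA1, hA2, hA3, hA4⟩ := hact
  have hq0 : ∀ i, q i ≠ 0 := fun i => (hq i).ne_zero (hk i).ne'
  have hq1 : ∀ i, q i ^ ((k i : ℕ) : ℤ) = 1 := fun i => by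
    rw [zpow_natCast]; exact (hq i).pow_eq_one
  -- the master formula for the action of `Lt x` on `eeB w ⊗ v`
  have key2 : ∀ (x w : Fin d → ℤ) (v : M),
      Lt x (eeB h2z k c w ⊗ₜ[ℂ] v)
        = cfK h2z k q γ x w • (eeB h2z k c (x + w) ⊗ₜ[ℂ] v)
          + eeB h2z k c w ⊗ₜ[ℂ] (LM x v) := by
    intro x w v
    by_cases hw : w ∈ Rgrp h2z k
    · rw [eeB_of_mem h2z k c hw, TensorProduct.zero_tmul, TensorProduct.zero_tmul, map_zero,
        add_zero]
      by_cases hx : x ∈ Rgrp h2z k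
      · rw [eeB_of_mem h2z k c (add_mem hx hw), TensorProduct.zero_tmul, smul_zero]
      · rw [cfK_of_not_mem h2z k q γ hx, qsigma_one_snd h2z hq1 x hw,
          qsigma_one_fst h2z hq1 x hw, sub_self, zero_smul]
    · rw [eeB_of_not_mem h2z k c hw]
      by_cases hx : x ∈ Rgrp h2z k
      · rw [hA1 x hx w hw v, cfK_of_mem h2z k q γ hx,
          eeB_of_not_mem h2z k c (add_not_mem_R h2z k hx hw)]
      · by_cases hxw : x + w ∈ Rgrp h2z k
        · rw [hA3 x hx w hw hxw v, cfK_of_not_mem h2z k q γ hx,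
            qsigma_symm' h2z hq0 hq1 hxw, sub_self, zero_smul, zero_add]
        · rw [hA2 x hx w hw hxw v, cfK_of_not_mem h2z k q γ hx,
            eeB_of_not_mem h2z k c hxw]
  -- the master formula for the action of `Tt n` on `eeB w ⊗ v`
  have keyT : ∀ (n : Fin d → ℤ), n ∈ Rgrp h2z k → ∀ (w : Fin d → ℤ) (v : M),
      Tt n (eeB h2z k c w ⊗ₜ[ℂ] v) = eeB h2z k c (n + w) ⊗ₜ[ℂ] v := by
    intro n hn w v
    by_cases hw : w ∈ Rgrp h2z k
    · rw [eeB_of_mem h2z k c hw, eeB_of_mem h2z k c (add_mem hn hw),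
        TensorProduct.zero_tmul, map_zero]
    · rw [eeB_of_not_mem h2z k c hw, hA4 n hn w hw v,
        eeB_of_not_mem h2z k c (add_not_mem_R h2z k hn hw)]
  -- the bracket of two `Lt`'s on `eeB w ⊗ v`
  have brkt : ∀ (x y w : Fin d → ℤ) (v : M),
      ⁅Lt x, Lt y⁆ (eeB h2z k c w ⊗ₜ[ℂ] v)
        = (cfK h2z k q γ y w * cfK h2z k q γ x (y + w)
            - cfK h2z k q γ x w * cfK h2z k q γ y (x + w))
              • (eeB h2z k c (x + y + w) ⊗ₜ[ℂ] v)
          + eeB h2z k c w ⊗ₜ[ℂ] (LM x (LM y v) - LM y (LM x v)) := by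
    intro x y w v
    have e1 : x + (y + w) = x + y + w := (add_assoc x y w).symm
    have e2 : y + (x + w) = x + y + w := by abel
    rw [LieRing.of_associative_ring_bracket, LinearMap.sub_apply, Module.End.mul_apply,
      Module.End.mul_apply]
    simp only [key2, map_add, map_smul, e1, e2, TensorProduct.tmul_sub]
    module
  refine ⟨⟨?_, ?_, ?_⟩, ?_, ?_, ?_, ?_⟩
  · -- [Lt m, Lt n] for m, n ∈ R
    intro m n hm hn
    apply endTensorExt c
    rintro ⟨s, hs⟩ v
    rw [← eeB_of_not_mem h2z k c hs, brkt m n s v, LinearMap.smul_apply, key2 (m + n) s v]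
    have hLM : LM m (LM n v) - LM n (LM m v) = ginner γ (n - m) • LM (m + n) v := by
      have h1 := hgRR m n hm hn
      rw [LieRing.of_associative_ring_bracket] at h1
      simpa using congrArg (fun f => f v) h1
    have hscal : cfK h2z k q γ n s * cfK h2z k q γ m (n + s)
        - cfK h2z k q γ m s * cfK h2z k q γ n (m + s)
        = ginner γ (n - m) * cfK h2z k q γ (m + n) s := by
      rw [cfK_of_mem h2z k q γ hn, cfK_of_mem h2z k q γ hm, cfK_of_mem h2z k q γ hm,
        cfK_of_mem h2z k q γ hn, cfK_of_mem h2z k q γ (add_mem hm hn),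
        ginner_add', ginner_add', ginner_sub']
      ring
    rw [hLM, hscal, TensorProduct.tmul_smul]
    module
  · -- [Lt m, Lt b] for m ∈ R, b ∉ R
    intro m b hm hb
    apply endTensorExt c
    rintro ⟨s, hs⟩ v
    rw [← eeB_of_not_mem h2z k c hs, brkt m b s v, LinearMap.smul_apply, key2 (m + b) s v]
    have hLM : LM m (LM b v) - LM b (LM m v) = ginner γ b • LM (m + b) v := by
      have h1 := hgRS m b hm hb
      rw [LieRing.of_associative_ring_bracket] at h1
      simpa using congrArg (fun f => f v) h1
    have s1 : qsigma h2z q b m = 1 := qsigma_one_snd h2z hq1 b hm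
    have s2 : qsigma h2z q m b = 1 := qsigma_one_fst h2z hq1 b hm
    have s3 : qsigma h2z q m s = 1 := qsigma_one_fst h2z hq1 s hm
    have s4 : qsigma h2z q s m = 1 := qsigma_one_snd h2z hq1 s hm
    have hscal : cfK h2z k q γ b s * cfK h2z k q γ m (b + s)
        - cfK h2z k q γ m s * cfK h2z k q γ b (m + s)
        = ginner γ b * cfK h2z k q γ (m + b) s := by
      rw [cfK_of_not_mem h2z k q γ hb, cfK_of_mem h2z k q γ hm, cfK_of_mem h2z k q γ hm,
        cfK_of_not_mem h2z k q γ hb, cfK_of_not_mem h2z k q γ (add_not_mem_R h2z k hm hb),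
        qsigma_add_snd h2z hq0 b m s, qsigma_add_fst h2z hq0 m s b,
        qsigma_add_fst h2z hq0 m b s, qsigma_add_snd h2z hq0 s m b,
        s1, s2, s3, s4, ginner_add']
      ring
    rw [hLM, hscal, TensorProduct.tmul_smul]
    module
  · -- [Lt a, Lt b] for a, b ∉ R
    intro a b ha hb
    apply endTensorExt c
    rintro ⟨s, hs⟩ v
    rw [← eeB_of_not_mem h2z k c hs, brkt a b s v, LinearMap.smul_apply, key2 (a + b) s v]
    have hLM : LM a (LM b v) - LM b (LM a v)
        = (qsigma h2z q a b - qsigma h2z q b a) • LM (a + b) v := by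
      have h1 := hgSS a b ha hb
      rw [LieRing.of_associative_ring_bracket] at h1
      simpa using congrArg (fun f => f v) h1
    have hscal : cfK h2z k q γ b s * cfK h2z k q γ a (b + s)
        - cfK h2z k q γ a s * cfK h2z k q γ b (a + s)
        = (qsigma h2z q a b - qsigma h2z q b a) * cfK h2z k q γ (a + b) s := by
      rw [cfK_of_not_mem h2z k q γ hb, cfK_of_not_mem h2z k q γ ha,
        cfK_of_not_mem h2z k q γ ha, cfK_of_not_mem h2z k q γ hb,
        qsigma_add_snd h2z hq0 a b s, qsigma_add_fst h2z hq0 b s a,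
        qsigma_add_snd h2z hq0 b a s, qsigma_add_fst h2z hq0 a s b]
      by_cases hab : a + b ∈ Rgrp h2z k
      · rw [cfK_of_mem h2z k q γ hab, qsigma_symm' h2z hq0 hq1 hab]
        ring
      · rw [cfK_of_not_mem h2z k q γ hab, qsigma_add_fst h2z hq0 a b s,
          qsigma_add_snd h2z hq0 s a b]
        ring
    rw [hLM, hscal, TensorProduct.tmul_smul]
    module
  · -- Tt m * Tt n = Tt (m + n)
    intro m n hm hn
    apply endTensorExt c
    rintro ⟨s, hs⟩ v
    rw [← eeB_of_not_mem h2z k c hs, Module.End.mul_apply, keyT n hn s v, keyT m hm (n + s) v,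
      keyT (m + n) (add_mem hm hn) s v, ← add_assoc]
  · -- Tt 0 = 1
    apply endTensorExt c
    rintro ⟨s, hs⟩ v
    rw [← eeB_of_not_mem h2z k c hs, keyT 0 (zero_mem _) s v, zero_add, Module.End.one_apply]
  · -- [Lt m, Tt n] = ginner γ n • Tt (m + n) for m, n ∈ R
    intro m n hm hn
    apply endTensorExt c
    rintro ⟨s, hs⟩ v
    have e1 : m + (n + s) = m + n + s := (add_assoc m n s).symm
    have e2 : n + (m + s) = m + n + s := by abel
    rw [← eeB_of_not_mem h2z k c hs, LieRing.of_associative_ring_bracket, LinearMap.sub_apply,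
      Module.End.mul_apply, Module.End.mul_apply, keyT n hn s v, key2 m (n + s) v, key2 m s v,
      map_add, LinearMap.map_smul, keyT n hn (m + s) v, keyT n hn s (LM m v),
      LinearMap.smul_apply, keyT (m + n) (add_mem hm hn) s v, e1, e2,
      cfK_of_mem h2z k q γ hm, cfK_of_mem h2z k q γ hm, ginner_add']
    module
  · -- [Lt r, Tt n] = 0 for r ∉ R, n ∈ R
    intro r n hr hn
    apply endTensorExt c
    rintro ⟨s, hs⟩ v
    have e1 : r + (n + s) = r + n + s := (add_assoc r n s).symm
    have e2 : n + (r + s) = r + n + s := by abel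
    have s1 : qsigma h2z q r n = 1 := qsigma_one_snd h2z hq1 r hn
    have s2 : qsigma h2z q n r = 1 := qsigma_one_fst h2z hq1 r hn
    rw [← eeB_of_not_mem h2z k c hs, LieRing.of_associative_ring_bracket, LinearMap.sub_apply,
      Module.End.mul_apply, Module.End.mul_apply, keyT n hn s v, key2 r (n + s) v, key2 r s v,
      map_add, LinearMap.map_smul, keyT n hn (r + s) v, keyT n hn s (LM r v),
      e1, e2, cfK_of_not_mem h2z k q γ hr, cfK_of_not_mem h2z k q γ hr,
      qsigma_add_snd h2z hq0 r n s, qsigma_add_fst h2z hq0 n s r, s1, s2, one_mul, one_mul,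
      LinearMap.zero_apply]
    module
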